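/- Let O : Λ × 𝒬 → ℝ be measurable with q ↦ O(λ,q)·p_a(λ,q) integrable. Then E_a[(ζ,q) ↦ g_a^λ(ζ,q)·O(λ,q)] = E[O|λ] · p_a^Λ(λ). Consequently, if p_a^Λ(λ) > 0, the conditional expectation of the observable given λ equals the ratio of expectations E[O|λ] = E_a[(ζ,q) ↦ g_a^λ(ζ,q)·O(λ,q)] / E_a[g_a^λ]. -/

import Mathlib

open MeasureTheory Real Finset

namespace ExpandedEnsemble

variable {Λ Q : Type*}

/-- Partition function of the expanded ensemble with biasing potential `a`. -/
noncomputable def Za [Fintype Λ] [MeasurableSpace Q] (μ : Measure Q)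
    (U : Λ → Q → ℝ) (a : Λ → ℝ) : ℝ :=
  ∑ ζ : Λ, ∫ q, Real.exp (a ζ - U ζ q) ∂μ

/-- Expanded-ensemble probability density `p_a(ζ,q) = exp(a(ζ) − U(ζ,q))/Z_a`. -/
noncomputable def pEE [Fintype Λ] [MeasurableSpace Q] (μ : Measure Q)
    (U : Λ → Q → ℝ) (a : Λ → ℝ) (ζ : Λ) (q : Q) : ℝ :=
  Real.exp (a ζ - U ζ q) / Za μ U a

/-- Expectation `E_a[F] = Σ_ζ ∫ F(ζ,q) p_a(ζ,q) dμ(q)` in the expanded ensemble. -/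
noncomputable def Ea [Fintype Λ] [MeasurableSpace Q] (μ : Measure Q)
    (U : Λ → Q → ℝ) (a : Λ → ℝ) (F : Λ → Q → ℝ) : ℝ :=
  ∑ ζ : Λ, ∫ q, F ζ q * pEE μ U a ζ q ∂μ

/-- Marginal probability of the external parameter, `p_a^Λ(λ) = ∫ p_a(λ,q) dμ(q)`. -/
noncomputable def pLam [Fintype Λ] [MeasurableSpace Q] (μ : Measure Q)
    (U : Λ → Q → ℝ) (a : Λ → ℝ) (l : Λ) : ℝ :=
  ∫ q, pEE μ U a l q ∂μ

/-- Marginal probability of the configuration, `p_a^𝒬(q) = Σ_ζ p_a(ζ,q)`. -/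
noncomputable def pQm [Fintype Λ] [MeasurableSpace Q] (μ : Measure Q)
    (U : Λ → Q → ℝ) (a : Λ → ℝ) (q : Q) : ℝ :=
  ∑ ζ : Λ, pEE μ U a ζ q

/-- Generic weighing function `g_a^λ(ζ,q) = (p_a(λ,q)/p_a(ζ,q)) K(λ,ζ)`. -/
noncomputable def gW [Fintype Λ] [MeasurableSpace Q] (μ : Measure Q)
    (U : Λ → Q → ℝ) (a : Λ → ℝ) (K : Λ → Λ → ℝ) (l ζ : Λ) (q : Q) : ℝ :=
  (pEE μ U a l q / pEE μ U a ζ q) * K l ζ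

/-- Conditional probability of `λ` given `q`:
`π_a^λ(q) = exp(a(λ) − U(λ,q)) / Σ_ζ exp(a(ζ) − U(ζ,q))`. -/
noncomputable def piL [Fintype Λ] (U : Λ → Q → ℝ) (a : Λ → ℝ) (l : Λ) (q : Q) : ℝ :=
  Real.exp (a l - U l q) / ∑ ζ : Λ, Real.exp (a ζ - U ζ q)

/-- Conditional expectation of the observable given `λ`:
`E[O|λ] = ∫ O(λ,q) π(q|λ) dμ(q)` with `π(q|λ) = p_a(λ,q)/p_a^Λ(λ)`. -/
noncomputable def condE [Fintype Λ] [MeasurableSpace Q] (μ : Measure Q)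
    (U : Λ → Q → ℝ) (a : Λ → ℝ) (O : Λ → Q → ℝ) (l : Λ) : ℝ :=
  ∫ q, O l q * (pEE μ U a l q / pLam μ U a l) ∂μ

/-- Variance `Var_a[F] = E_a[F²] − (E_a[F])²`. -/
noncomputable def VarA [Fintype Λ] [MeasurableSpace Q] (μ : Measure Q)
    (U : Λ → Q → ℝ) (a : Λ → ℝ) (F : Λ → Q → ℝ) : ℝ :=
  Ea μ U a (fun ζ q => F ζ q ^ 2) - (Ea μ U a F) ^ 2

/-- Conditional weight `w_a(ζ,q) = p_a(ζ,q)/p_a^𝒬(q)`. -/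
noncomputable def wA [Fintype Λ] [MeasurableSpace Q] (μ : Measure Q)
    (U : Λ → Q → ℝ) (a : Λ → ℝ) (ζ : Λ) (q : Q) : ℝ :=
  pEE μ U a ζ q / pQm μ U a q

/-- Conditional variance of `F` given `q`. -/
noncomputable def condVar [Fintype Λ] [MeasurableSpace Q] (μ : Measure Q)
    (U : Λ → Q → ℝ) (a : Λ → ℝ) (F : Λ → Q → ℝ) (q : Q) : ℝ :=
  ∑ ζ : Λ, F ζ q ^ 2 * wA μ U a ζ q - (∑ ζ : Λ, F ζ q * wA μ U a ζ q) ^ 2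

/-- Expectation with respect to the marginal of `q`: `E_a^𝒬[h] = ∫ h(q) p_a^𝒬(q) dμ(q)`. -/
noncomputable def EQm [Fintype Λ] [MeasurableSpace Q] (μ : Measure Q)
    (U : Λ → Q → ℝ) (a : Λ → ℝ) (h : Q → ℝ) : ℝ :=
  ∫ q, h q * pQm μ U a q ∂μ

/-- Variance with respect to the marginal of `q`. -/
noncomputable def VarQ [Fintype Λ] [MeasurableSpace Q] (μ : Measure Q)
    (U : Λ → Q → ℝ) (a : Λ → ℝ) (h : Q → ℝ) : ℝ :=
  EQm μ U a (fun q => h q ^ 2) - (EQm μ U a h) ^ 2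

/-- Partition function of the unbiased expanded ensemble. -/
noncomputable def Z0 [Fintype Λ] [MeasurableSpace Q] (μ : Measure Q)
    (U : Λ → Q → ℝ) : ℝ :=
  ∑ ζ : Λ, ∫ q, Real.exp (-U ζ q) ∂μ

/-- Unbiased expanded-ensemble density `p_0(ζ,q) = exp(−U(ζ,q))/Z_0`. -/
noncomputable def p0 [Fintype Λ] [MeasurableSpace Q] (μ : Measure Q)
    (U : Λ → Q → ℝ) (ζ : Λ) (q : Q) : ℝ :=
  Real.exp (-U ζ q) / Z0 μ U

/-- Unbiased total expectation `E[O] = Σ_ζ ∫ O(ζ,q) p_0(ζ,q) dμ(q)`. -/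
noncomputable def E0 [Fintype Λ] [MeasurableSpace Q] (μ : Measure Q)
    (U : Λ → Q → ℝ) (O : Λ → Q → ℝ) : ℝ :=
  ∑ ζ : Λ, ∫ q, O ζ q * p0 μ U ζ q ∂μ

/-- Modified generic weighing function `𝕘_a^λ(ζ,q) = exp(−a(λ)) g_a^λ(ζ,q)`. -/
noncomputable def gMod [Fintype Λ] [MeasurableSpace Q] (μ : Measure Q)
    (U : Λ → Q → ℝ) (a : Λ → ℝ) (K : Λ → Λ → ℝ) (l ζ : Λ) (q : Q) : ℝ :=
  Real.exp (-a l) * gW μ U a K l ζ q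

/-- Total modified weighing function `𝕘_a = Σ_λ 𝕘_a^λ`. -/
noncomputable def gModT [Fintype Λ] [MeasurableSpace Q] (μ : Measure Q)
    (U : Λ → Q → ℝ) (a : Λ → ℝ) (K : Λ → Λ → ℝ) (ζ : Λ) (q : Q) : ℝ :=
  ∑ l : Λ, gMod μ U a K l ζ q

/-- Conditioned modified weighing function
`𝕟_a^λ(q) = exp(−U(λ,q)) / Σ_ζ exp(a(ζ) − U(ζ,q))`. -/
noncomputable def nMod [Fintype Λ] (U : Λ → Q → ℝ) (a : Λ → ℝ) (l : Λ) (q : Q) : ℝ :=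
  Real.exp (-U l q) / ∑ ζ : Λ, Real.exp (a ζ - U ζ q)

/-- Total conditioned modified weighing function `𝕟_a = Σ_λ 𝕟_a^λ`. -/
noncomputable def nModT [Fintype Λ] (U : Λ → Q → ℝ) (a : Λ → ℝ) (q : Q) : ℝ :=
  ∑ l : Λ, nMod U a l q

end ExpandedEnsemble

open MeasureTheory ExpandedEnsemble

/-- `E_a[g_a^λ · O(λ,·)] = E[O|λ] · p_a^Λ(λ)`; consequently, if `p_a^Λ(λ) > 0`, the
conditional expectation of the observable given `λ` is the ratio of expectations
`E[O|λ] = E_a[g_a^λ O(λ,·)] / E_a[g_a^λ]`. -/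
theorem conditional_expectation_as_ratio
    {Λ Q : Type*} [Fintype Λ] [Nonempty Λ] [MeasurableSpace Q]
    (μ : Measure Q) [SigmaFinite μ]
    (U : Λ → Q → ℝ) (hU : ∀ ζ, Measurable (U ζ)) (a : Λ → ℝ)
    (hInt : ∀ ζ, Integrable (fun q => Real.exp (a ζ - U ζ q)) μ)
    (hZ : 0 < Za μ U a)
    (K : Λ → Λ → ℝ) (hK : ∀ l : Λ, ∑ ζ : Λ, K l ζ = 1)
    (l : Λ) (O : Λ → Q → ℝ) (hO : ∀ ζ, Measurable (O ζ))
    (hOint : Integrable (fun q => O l q * pEE μ U a l q) μ) :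
    Ea μ U a (fun ζ q => gW μ U a K l ζ q * O l q) = condE μ U a O l * pLam μ U a l
    ∧ (0 < pLam μ U a l →
        condE μ U a O l =
          Ea μ U a (fun ζ q => gW μ U a K l ζ q * O l q) / Ea μ U a (gW μ U a K l)) := by
  have hpne : ∀ ζ q, pEE μ U a ζ q ≠ 0 := fun ζ q =>
    (div_pos (Real.exp_pos _) hZ).ne'
  set I : ℝ := ∫ q, O l q * pEE μ U a l q ∂μ with hIdef
  have hEaO : Ea μ U a (fun ζ q => gW μ U a K l ζ q * O l q) = I := by
    unfold Ea
    have key : ∀ ζ : Λ, (∫ q, (gW μ U a K l ζ q * O l q) * pEE μ U a ζ q ∂μ)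
        = I * K l ζ := by
      intro ζ
      rw [hIdef, ← integral_mul_const]
      congr 1; funext q
      have h := hpne ζ q
      unfold gW
      field_simp
    rw [Finset.sum_congr rfl (fun ζ _ => key ζ), ← Finset.mul_sum, hK l, mul_one]
  have hEag : Ea μ U a (gW μ U a K l) = pLam μ U a l := by
    unfold Ea pLam
    have key : ∀ ζ : Λ, (∫ q, gW μ U a K l ζ q * pEE μ U a ζ q ∂μ)
        = (∫ q, pEE μ U a l q ∂μ) * K l ζ := by
      intro ζ
      rw [← integral_mul_const]
      congr 1; funext q
      have h := hpne ζ q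
      unfold gW
      field_simp
    rw [Finset.sum_congr rfl (fun ζ _ => key ζ), ← Finset.mul_sum, hK l, mul_one]
  have hI : I = condE μ U a O l * pLam μ U a l := by
    rcases eq_or_ne (pLam μ U a l) 0 with h0 | h0
    · have hμ0 : μ = 0 := by
        by_contra hμ
        have hInt' : Integrable (pEE μ U a l) μ := by
          have := (hInt l).div_const (Za μ U a)
          exact this
        have hpos : 0 < pLam μ U a l := by
          unfold pLam
          rw [integral_pos_iff_support_of_nonneg (f := pEE μ U a l)
            (fun q => (div_pos (Real.exp_pos _) hZ).le) hInt']
          have : Function.support (pEE μ U a l) = Set.univ := by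
            ext q; simp [hpne l q]
          rw [this]
          simpa [Measure.measure_univ_pos] using hμ
        exact h0.symm.not_lt hpos
      rw [h0, mul_zero, hIdef, hμ0]
      simp
    · unfold condE
      have : (∫ q, O l q * (pEE μ U a l q / pLam μ U a l) ∂μ)
          = I / pLam μ U a l := by
        rw [hIdef, ← integral_div]
        congr 1; funext q; ring
      rw [this, div_mul_cancel₀ _ h0]
  refine ⟨hEaO.trans hI, fun hp => ?_⟩
  rw [hEaO, hEag, hI, mul_div_assoc, div_self hp.ne', mul_one]
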